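/- arXiv:1811.11685 — 3 statements merged into one kernel-verified Lean document; each statement's English description precedes it below -/
import Mathlib

section
/- Let λ = [λ(0), ..., λ(m)] be a finite path and suppose k < m is a cut time for λ, meaning λ[0,k] ∩ λ[k+1,m] = ∅. Then the loop-erasure of λ decomposes as the concatenation LE(λ) = LE(λ[0,k]) ⊕ LE(λ[k+1,m]). -/
/-- Points of the integer lattice `ℤ³`. -/
abbrev Z3 := Fin 3 → ℤ

/-- Nearest-neighbor adjacency on `ℤ³`. -/
def Z3.adj (x y : Z3) : Prop := (∑ i, |x i - y i|) = 1

/-- A (finite, nearest-neighbor) path in `ℤ³`: a nonempty list of points with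
consecutive points adjacent. -/
def IsPath (l : List Z3) : Prop := l ≠ [] ∧ l.Chain' Z3.adj

/-- Chronological loop-erasure of a finite list: keep the first point `a`, then
continue with the part of the list strictly after the *last* occurrence of `a`
(which is `(l.reverse.takeWhile (· ≠ a)).reverse`). -/
def loopErase {α : Type*} [DecidableEq α] : List α → List α
  | [] => []
  | a :: l => a :: loopErase ((l.reverse.takeWhile (fun b => decide (b ≠ a))).reverse)
termination_by l => l.length
decreasing_by
  simp only [List.length_cons, List.length_reverse]
  exact Nat.lt_succ_of_le ((List.Sublist.length_le (List.takeWhile_sublist _)).trans (by simp))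

lemma takeWhile_app {α : Type*} (p : α → Bool) (L M : List α)
    (h : ∀ x ∈ L, p x = true) : (L ++ M).takeWhile p = L ++ M.takeWhile p := by
  induction L with
  | nil => simp
  | cons a t ih =>
    simp only [List.cons_append, List.takeWhile_cons, h a (by simp)]
    simp [ih fun x hx => h x (by simp [hx])]

lemma loopErase_append {α : Type*} [DecidableEq α] (A B : List α)
    (h : ∀ x ∈ A, x ∉ B) : loopErase (A ++ B) = loopErase A ++ loopErase B := by
  match A with
  | [] => rw [List.nil_append, loopErase, List.nil_append]
  | a :: l =>
    have haB : a ∉ B := h a (by simp)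
    set p : α → Bool := fun b => decide (b ≠ a) with hp
    have hBp : ∀ x ∈ B.reverse, p x = true := by
      intro x hx
      simp only [hp, decide_eq_true_eq]
      rintro rfl
      exact haB (List.mem_reverse.mp hx)
    have hsub : (l.reverse.takeWhile p).reverse.Sublist l := by
      simpa using (List.takeWhile_sublist (l := l.reverse) p).reverse
    have key : ((l ++ B).reverse.takeWhile p).reverse
        = (l.reverse.takeWhile p).reverse ++ B := by
      rw [List.reverse_append, takeWhile_app p B.reverse l.reverse hBp,
        List.reverse_append, List.reverse_reverse]
    rw [List.cons_append, loopErase, key, loopErase,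
      loopErase_append ((l.reverse.takeWhile p).reverse) B
        (fun x hx => h x (by simp [hsub.mem hx]))]
    simp only [hp, List.cons_append]
termination_by A.length
decreasing_by
  simp only [List.length_cons, List.length_reverse]
  exact Nat.lt_succ_of_le ((List.Sublist.length_le (List.takeWhile_sublist _)).trans (by simp))

/-- If `k < m` is a cut time for the path `λ = [λ(0), …, λ(m)]`,
i.e. `λ[0,k]` and `λ[k+1,m]` share no vertex, then the loop-erasure decomposes
as the concatenation `LE(λ) = LE(λ[0,k]) ⊕ LE(λ[k+1,m])`. -/
theorem loopErase_cutTime (l : List Z3) (h : IsPath l) (k : ℕ)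
    (hk : k + 1 < l.length)
    (hcut : ∀ x ∈ l.take (k + 1), x ∉ l.drop (k + 1)) :
    loopErase l = loopErase (l.take (k + 1)) ++ loopErase (l.drop (k + 1)) := by
  conv_lhs => rw [← List.take_append_drop (k + 1) l]
  exact loopErase_append _ _ hcut
end

section
/- Let λ be a finite path, B a set of vertices, and suppose λ visits B. Let T be the last time λ is in B, let η = LE(λ[0,T]) be the loop-erasure of the initial segment up to T, and let u be the first index at which η enters B. Then the loop-erasure LE(λ) intersects B if and only if η[0,u] ∩ λ[T+1, m] = ∅, where m is the length of λ. -/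
namespace LEAux

variable {α : Type*} [DecidableEq α]

def chop (l : List α) (a : α) : List α :=
  (l.reverse.takeWhile (fun b => decide (b ≠ a))).reverse

lemma loopErase_cons (a : α) (l : List α) :
    loopErase (a :: l) = a :: loopErase (chop l a) := by
  rw [loopErase, chop]

lemma chop_sublist (l : List α) (a : α) : List.Sublist (chop l a) l := by
  have h := (List.takeWhile_sublist (l := l.reverse) (fun b => decide (b ≠ a))).reverse
  simpa [chop] using h

lemma mem_of_mem_loopErase : ∀ (l : List α) (x : α), x ∈ loopErase l → x ∈ l
  | [], x, h => by simpa [loopErase] using h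
  | a :: l, x, h => by
    rw [loopErase_cons] at h
    rcases List.mem_cons.1 h with h | h
    · simp [h]
    · exact List.mem_cons_of_mem _ ((chop_sublist l a).subset (mem_of_mem_loopErase _ x h))
termination_by l => l.length
decreasing_by
  simp only [List.length_cons]
  exact Nat.lt_succ_of_le (chop_sublist l a).length_le

lemma takeWhile_append_of_forall {p : α → Bool} {l₁ : List α} (h : ∀ x ∈ l₁, p x)
    (l₂ : List α) : (l₁ ++ l₂).takeWhile p = l₁ ++ l₂.takeWhile p := by
  induction l₁ with
  | nil => simp
  | cons a l ih =>
    simp [List.takeWhile_cons, h a List.mem_cons_self,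
      ih (fun x hx => h x (List.mem_cons_of_mem _ hx))]

lemma takeWhile_append_of_exists {p : α → Bool} {l₁ : List α} (h : ∃ x ∈ l₁, ¬ p x)
    (l₂ : List α) : (l₁ ++ l₂).takeWhile p = l₁.takeWhile p := by
  induction l₁ with
  | nil => simp at h
  | cons a l ih =>
    by_cases hpa : p a
    · obtain ⟨x, hx, hpx⟩ := h
      have hxl : x ∈ l := by
        rcases List.mem_cons.1 hx with rfl | hxl
        · exact absurd hpa hpx
        · exact hxl
      simp only [List.cons_append, List.takeWhile_cons, hpa]
      rw [ih ⟨x, hxl, hpx⟩]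
    · simp [List.takeWhile_cons, hpa]

lemma chop_append_not_mem {a : α} {t : List α} (h : a ∉ t) (s : List α) :
    chop (s ++ t) a = chop s a ++ t := by
  unfold chop
  rw [List.reverse_append,
    takeWhile_append_of_forall (fun x hx => by
      simp only [decide_eq_true_eq]
      rintro rfl
      exact h (List.mem_reverse.1 hx)),
    List.reverse_append, List.reverse_reverse]

lemma chop_append_mem {a : α} {t : List α} (h : a ∈ t) (s : List α) :
    chop (s ++ t) a = chop t a := by
  unfold chop
  rw [List.reverse_append, takeWhile_append_of_exists ⟨a, List.mem_reverse.2 h, by simp⟩]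

lemma loopErase_append_disjoint : ∀ (n : ℕ) (s : List α), s.length ≤ n →
    ∀ (t : List α), (∀ x ∈ loopErase s, x ∉ t) →
    loopErase (s ++ t) = loopErase s ++ loopErase t := by
  intro n
  induction n with
  | zero =>
    intro s hs t _
    rw [List.length_eq_zero_iff.1 (Nat.le_zero.1 hs)]
    simp [loopErase]
  | succ n ih =>
    rintro (_ | ⟨a, s⟩) hs t h
    · simp [loopErase]
    · have ha : a ∉ t := h a (by rw [loopErase_cons]; exact List.mem_cons_self)
      have hrec := ih (chop s a)
        (le_trans (chop_sublist s a).length_le (Nat.le_of_succ_le_succ hs)) t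
        (fun x hx => h x (by rw [loopErase_cons]; exact List.mem_cons_of_mem _ hx))
      rw [List.cons_append, loopErase_cons, chop_append_not_mem ha, hrec,
        loopErase_cons, List.cons_append]

lemma loopErase_append_first : ∀ (n : ℕ) (s : List α), s.length ≤ n →
    ∀ (t p : List α) (a : α) (r : List α), loopErase s = p ++ a :: r →
    (∀ b ∈ p, b ∉ t) → a ∈ t →
    loopErase (s ++ t) = p ++ a :: loopErase (chop t a) := by
  intro n
  induction n with
  | zero =>
    intro s hs t p a r he _ _
    rw [List.length_eq_zero_iff.1 (Nat.le_zero.1 hs)] at he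
    simp [loopErase] at he
  | succ n ih =>
    rintro (_ | ⟨b, s⟩) hs t p a r he hp ha
    · simp [loopErase] at he
    · rw [loopErase_cons] at he
      cases p with
      | nil =>
        obtain ⟨rfl, -⟩ : b = a ∧ _ := List.cons.inj he
        rw [List.cons_append, loopErase_cons, chop_append_mem ha, List.nil_append]
      | cons c p' =>
        obtain ⟨rfl, he'⟩ : b = c ∧ _ := List.cons.inj he
        have hb : b ∉ t := hp b List.mem_cons_self
        have hrec := ih (chop s b)
          (le_trans (chop_sublist s b).length_le (Nat.le_of_succ_le_succ hs)) t p' a r he'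
          (fun x hx => hp x (List.mem_cons_of_mem _ hx)) ha
        rw [List.cons_append, loopErase_cons, chop_append_not_mem hb, hrec, List.cons_append]

end LEAux

namespace LEAux

lemma key {α : Type*} [DecidableEq α] (s t : List α) (B : Set α)
    (hB2 : ∀ x ∈ t, x ∉ B)
    (u : ℕ) (hu : u < (loopErase s).length)
    (huB : (loopErase s).get ⟨u, hu⟩ ∈ B)
    (hufirst : ∀ j (hj : j < (loopErase s).length), j < u →
      (loopErase s).get ⟨j, hj⟩ ∉ B) :
    (∃ x ∈ loopErase (s ++ t), x ∈ B) ↔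
      ∀ x ∈ (loopErase s).take (u + 1), x ∉ t := by
  classical
  obtain ⟨η, hη⟩ : ∃ η, loopErase s = η := ⟨_, rfl⟩
  revert hu huB hufirst
  rw [hη]
  intro hu huB hufirst
  by_cases hdis : ∀ x ∈ η, x ∉ t
  · have hsplit : loopErase (s ++ t) = η ++ loopErase t := by
      rw [loopErase_append_disjoint s.length s le_rfl t (hη ▸ hdis), hη]
    constructor
    · intro _ x hx
      exact hdis x (List.take_subset _ _ hx)
    · intro _
      refine ⟨η.get ⟨u, hu⟩, ?_, huB⟩
      rw [hsplit]
      exact List.mem_append_left _ (List.get_mem _ _)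
  · obtain ⟨q, hq⟩ : ∃ q : α → Bool, (fun x => decide (x ∉ t)) = q := ⟨_, rfl⟩
    obtain ⟨p, hp⟩ : ∃ p, η.takeWhile q = p := ⟨_, rfl⟩
    have hpd : p ++ η.dropWhile q = η := by rw [← hp]; exact List.takeWhile_append_dropWhile (p := q) (l := η)
    have hmemp : ∀ b ∈ p, b ∉ t := by
      intro b hb
      have := List.mem_takeWhile_imp (hp ▸ hb)
      rw [← hq] at this
      simpa using this
    have hdne : η.dropWhile q ≠ [] := by
      intro h0
      rw [h0, List.append_nil] at hpd
      exact hdis (fun x hx => hmemp x (hpd ▸ hx))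
    obtain ⟨a, r, har⟩ := List.exists_cons_of_ne_nil hdne
    have haq : q a = false := by
      have h1 := List.head_dropWhile_not q (l := η) (by rw [har]; simp)
      have h2 : (η.dropWhile q).head (by rw [har]; simp) = a := by
        simp [har]
      rwa [h2] at h1
    have ha2 : a ∈ t := by
      rw [← hq] at haq
      simpa using haq
    have hη_eq : η = p ++ a :: r := by rw [← hpd, har]
    have hLE : loopErase (s ++ t) = p ++ a :: loopErase (chop t a) := by
      exact loopErase_append_first s.length s le_rfl t p a r (hη ▸ hη_eq) hmemp ha2
    have hppre : p <+: η := hp ▸ List.takeWhile_prefix q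
    have hplen : p.length < η.length := by rw [hη_eq]; simp
    by_cases hk : p.length ≤ u
    · constructor
      · rintro ⟨x, hx, hxB⟩
        exfalso
        rw [hLE] at hx
        rcases List.mem_append.1 hx with hx | hx
        · obtain ⟨j, hj, rfl⟩ := List.mem_iff_getElem.1 hx
          have hjη : j < η.length := lt_trans hj hplen
          rw [hppre.getElem hj] at hxB
          exact hufirst j hjη (lt_of_lt_of_le hj hk) hxB
        · rcases List.mem_cons.1 hx with rfl | hx
          · exact hB2 _ ha2 hxB
          · exact hB2 _ ((chop_sublist _ _).subset (mem_of_mem_loopErase _ _ hx)) hxB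
      · intro hR
        exfalso
        refine hR a ?_ ha2
        rw [hη_eq, List.take_append]
        refine List.mem_append_right _ ?_
        obtain ⟨m, hm⟩ := Nat.exists_eq_add_of_le (show 1 ≤ u + 1 - p.length by omega)
        rw [hm]
        simp [List.take_cons]
    · push_neg at hk
      constructor
      · intro _ x hx hx2
        have hxp : x ∈ p := by
          have he : η.take (u + 1) = p.take (u + 1) := by
            rw [List.prefix_iff_eq_take.1 hppre, List.take_take,
              min_eq_left (by omega)]
          rw [he] at hx
          exact List.take_subset _ _ hx
        exact hmemp x hxp hx2
      · intro _
        refine ⟨η.get ⟨u, hu⟩, ?_, huB⟩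
        rw [hLE]
        refine List.mem_append_left _ ?_
        have : η.get ⟨u, hu⟩ = p[u]'hk := by
          simp only [List.get_eq_getElem]
          exact (hppre.getElem hk).symm
        rw [this]
        exact List.getElem_mem _

end LEAux

/-- Let `λ` be a finite path, `B` a set of vertices visited by
`λ`.  Let `T` be the last time `λ` is in `B`, let `η = LE(λ[0,T])` and let `u`
be the first index at which `η` enters `B`.  Then `LE(λ)` intersects `B` if and
only if `η[0,u] ∩ λ[T+1,m] = ∅`. -/
theorem loopErase_hits_iff (l : List Z3) (hl : IsPath l) (B : Set Z3)
    (T : ℕ) (hT : T < l.length)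
    (hTB : l.get ⟨T, hT⟩ ∈ B)
    (hTlast : ∀ j (hj : j < l.length), T < j → l.get ⟨j, hj⟩ ∉ B)
    (u : ℕ) (hu : u < (loopErase (l.take (T + 1))).length)
    (huB : (loopErase (l.take (T + 1))).get ⟨u, hu⟩ ∈ B)
    (hufirst : ∀ j (hj : j < (loopErase (l.take (T + 1))).length), j < u →
      (loopErase (l.take (T + 1))).get ⟨j, hj⟩ ∉ B) :
    (∃ x ∈ loopErase l, x ∈ B) ↔
      ∀ x ∈ (loopErase (l.take (T + 1))).take (u + 1), x ∉ l.drop (T + 1) := by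
  have hB2 : ∀ x ∈ l.drop (T + 1), x ∉ B := by
    intro x hx
    obtain ⟨i, hi, hxe⟩ := List.mem_iff_getElem.1 hx
    rw [List.getElem_drop] at hxe
    subst hxe
    exact hTlast _ _ (by omega)
  have := LEAux.key (l.take (T + 1)) (l.drop (T + 1)) B hB2 u hu huB hufirst
  rwa [List.take_append_drop] at this
end

section
/- Let (X_i), (Y_i), α, X, Y be as above, and suppose there are constants 0 < ξ < 1 and C such that: (i) for all pairs (i,j) in a set G, |E[(X_i−α)(X_j−α) | Y_i=Y_j=1]| ≤ ξ α², (ii) for all pairs (i,j) not in G, E[(X_i−α)(X_j−α) | Y_i=Y_j=1] ≤ C α² and Σ_{(i,j)∉G} P(Y_i=Y_j=1) ≤ ξ Σ_{(i,j)∈G} P(Y_i=Y_j=1), and (iii) for (i,j) ∈ G, α² P(Y_i=Y_j=1) ≤ C E[X_i X_j]. Then E[(X − αY)²] ≤ (1 + C) C ξ E[X²]. -/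
open MeasureTheory ProbabilityTheory

lemma indicator_integral_eq_aux {Ω : Type*} [Fintype Ω] [MeasurableSpace Ω]
    [MeasurableSingletonClass Ω] (P : Measure Ω) [IsProbabilityMeasure P]
    (s : Set Ω) (f : Ω → ℝ) :
    ∫ ω, s.indicator f ω ∂P = (P s).toReal * ∫ ω, f ω ∂(ProbabilityTheory.cond P s) := by
  have hs : MeasurableSet s := s.toFinite.measurableSet
  rw [integral_indicator hs, ProbabilityTheory.cond, integral_smul_measure]
  by_cases h0 : P s = 0
  · rw [Measure.restrict_eq_zero.mpr h0]
    simp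
  · have hfin : P s ≠ ⊤ := measure_ne_top P s
    rw [smul_eq_mul, ← mul_assoc, ENNReal.toReal_inv,
      mul_inv_cancel₀ (by simp [ENNReal.toReal_ne_zero, h0, hfin]), one_mul]

/-- In the setup of the second-moment decomposition, suppose
there are constants `0 < ξ < 1` and `C > 0` and a set `G` of index pairs such
that: (i) for `(i,j) ∈ G` the conditional covariance satisfies
`|E[(X_i−α)(X_j−α) | Y_i=Y_j=1]| ≤ ξ α²`; (ii) for `(i,j) ∉ G` it is at most
`C α²` and `Σ_{(i,j)∉G} P(Y_i=Y_j=1) ≤ ξ Σ_{(i,j)∈G} P(Y_i=Y_j=1)`; and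
(iii) for `(i,j) ∈ G`, `α² P(Y_i=Y_j=1) ≤ C E[X_i X_j]`.  Then
`E[(X − αY)²] ≤ (1 + C) C ξ E[X²]`. -/
theorem second_moment_estimate {Ω : Type*} [Fintype Ω] [MeasurableSpace Ω]
    [MeasurableSingletonClass Ω]
    (P : Measure Ω) [IsProbabilityMeasure P] (N : ℕ)
    (X Y : Fin N → Ω → ℝ)
    (hY : ∀ i ω, Y i ω = 0 ∨ Y i ω = 1)
    (hX : ∀ i ω, 0 ≤ X i ω)
    (hXY : ∀ i ω, Y i ω = 0 → X i ω = 0)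
    (α : ℝ) (G : Finset (Fin N × Fin N)) (ξ C : ℝ)
    (hξ0 : 0 < ξ) (hξ1 : ξ < 1) (hC : 0 < C)
    (hGood : ∀ p ∈ G,
      |∫ ω, (X p.1 ω - α) * (X p.2 ω - α)
          ∂(ProbabilityTheory.cond P {ω | Y p.1 ω = 1 ∧ Y p.2 ω = 1})| ≤ ξ * α ^ 2)
    (hBad : ∀ p ∈ Gᶜ,
      ∫ ω, (X p.1 ω - α) * (X p.2 ω - α)
          ∂(ProbabilityTheory.cond P {ω | Y p.1 ω = 1 ∧ Y p.2 ω = 1}) ≤ C * α ^ 2)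
    (hBadMass : ∑ p ∈ Gᶜ, (P {ω | Y p.1 ω = 1 ∧ Y p.2 ω = 1}).toReal ≤
      ξ * ∑ p ∈ G, (P {ω | Y p.1 ω = 1 ∧ Y p.2 ω = 1}).toReal)
    (hOnePoint : ∀ p ∈ G,
      α ^ 2 * (P {ω | Y p.1 ω = 1 ∧ Y p.2 ω = 1}).toReal ≤
        C * ∫ ω, X p.1 ω * X p.2 ω ∂P) :
    ∫ ω, ((∑ i, X i ω) - α * (∑ i, Y i ω)) ^ 2 ∂P ≤
      (1 + C) * C * ξ * ∫ ω, (∑ i, X i ω) ^ 2 ∂P := by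
  classical
  set s : Fin N × Fin N → Set Ω := fun p => {ω | Y p.1 ω = 1 ∧ Y p.2 ω = 1} with hsdef
  set μp : Fin N × Fin N → ℝ := fun p => (P (s p)).toReal with hμdef
  set cp : Fin N × Fin N → ℝ := fun p =>
    ∫ ω, (X p.1 ω - α) * (X p.2 ω - α) ∂(ProbabilityTheory.cond P (s p)) with hcdef
  have hint : ∀ (f : Ω → ℝ), Integrable f P := fun f => .of_finite
  -- pointwise decomposition of the square
  have key : ∀ ω, ((∑ i, X i ω) - α * (∑ i, Y i ω)) ^ 2
      = ∑ p : Fin N × Fin N,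
          (s p).indicator (fun ω => (X p.1 ω - α) * (X p.2 ω - α)) ω := by
    intro ω
    have h1 : (∑ i, X i ω) - α * (∑ i, Y i ω) = ∑ i, (X i ω - α * Y i ω) := by
      rw [Finset.sum_sub_distrib, Finset.mul_sum]
    rw [h1, sq, Finset.sum_mul_sum, Fintype.sum_prod_type]
    apply Finset.sum_congr rfl
    intro i _
    apply Finset.sum_congr rfl
    intro j _
    rcases hY i ω with h1 | h1 <;> rcases hY j ω with h2 | h2
    · simp [Set.indicator_apply, s, h1, h2, hXY i ω h1]
    · simp [Set.indicator_apply, s, h1, h2, hXY i ω h1]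
    · simp [Set.indicator_apply, s, h1, h2, hXY j ω h2]
    · simp [Set.indicator_apply, s, h1, h2]
  have step1 : ∫ ω, ((∑ i, X i ω) - α * (∑ i, Y i ω)) ^ 2 ∂P
      = ∑ p : Fin N × Fin N, μp p * cp p := by
    simp_rw [key]
    rw [integral_finset_sum _ (fun p _ => hint _)]
    exact Finset.sum_congr rfl fun p _ => indicator_integral_eq_aux P (s p) _
  have step2 : ∫ ω, (∑ i, X i ω) ^ 2 ∂P
      = ∑ p : Fin N × Fin N, ∫ ω, X p.1 ω * X p.2 ω ∂P := by
    rw [← integral_finset_sum _ (fun p _ => hint _)]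
    apply integral_congr_ae
    filter_upwards with ω
    rw [sq, Finset.sum_mul_sum, Fintype.sum_prod_type]
  -- nonnegativity facts
  have hμ0 : ∀ p, 0 ≤ μp p := fun p => ENNReal.toReal_nonneg
  have hα2 : (0:ℝ) ≤ α ^ 2 := sq_nonneg α
  have hSG : (0:ℝ) ≤ ∑ p ∈ G, μp p := Finset.sum_nonneg fun p _ => hμ0 p
  -- good part
  have hA : ∑ p ∈ G, μp p * cp p ≤ ξ * α ^ 2 * ∑ p ∈ G, μp p := by
    rw [Finset.mul_sum]
    apply Finset.sum_le_sum
    intro p hp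
    calc μp p * cp p ≤ μp p * (ξ * α ^ 2) :=
          mul_le_mul_of_nonneg_left (le_trans (le_abs_self _) (hGood p hp)) (hμ0 p)
      _ = ξ * α ^ 2 * μp p := by ring
  -- bad part
  have hB : ∑ p ∈ Gᶜ, μp p * cp p ≤ C * α ^ 2 * (ξ * ∑ p ∈ G, μp p) := by
    have h1 : ∑ p ∈ Gᶜ, μp p * cp p ≤ C * α ^ 2 * ∑ p ∈ Gᶜ, μp p := by
      rw [Finset.mul_sum]
      apply Finset.sum_le_sum
      intro p hp
      calc μp p * cp p ≤ μp p * (C * α ^ 2) :=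
            mul_le_mul_of_nonneg_left (hBad p hp) (hμ0 p)
        _ = C * α ^ 2 * μp p := by ring
    have h2 : (∑ p ∈ Gᶜ, μp p) ≤ ξ * ∑ p ∈ G, μp p := hBadMass
    exact h1.trans (mul_le_mul_of_nonneg_left h2 (by positivity))
  -- one-point bound
  have hD : α ^ 2 * ∑ p ∈ G, μp p ≤ C * ∫ ω, (∑ i, X i ω) ^ 2 ∂P := by
    rw [step2, Finset.mul_sum, Finset.mul_sum]
    calc ∑ p ∈ G, α ^ 2 * μp p ≤ ∑ p ∈ G, C * ∫ ω, X p.1 ω * X p.2 ω ∂P :=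
          Finset.sum_le_sum fun p hp => hOnePoint p hp
      _ ≤ ∑ p : Fin N × Fin N, C * ∫ ω, X p.1 ω * X p.2 ω ∂P := by
          apply Finset.sum_le_sum_of_subset_of_nonneg (Finset.subset_univ G)
          intro p _ _
          exact mul_nonneg hC.le
            (integral_nonneg fun ω => mul_nonneg (hX _ _) (hX _ _))
  -- combine
  rw [step1, ← Finset.sum_add_sum_compl G (fun p => μp p * cp p)]
  have hfin : ξ * α ^ 2 * ∑ p ∈ G, μp p + C * α ^ 2 * (ξ * ∑ p ∈ G, μp p)
      = (1 + C) * ξ * (α ^ 2 * ∑ p ∈ G, μp p) := by ring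
  calc ∑ p ∈ G, μp p * cp p + ∑ p ∈ Gᶜ, μp p * cp p
      ≤ (1 + C) * ξ * (α ^ 2 * ∑ p ∈ G, μp p) := by rw [← hfin]; exact add_le_add hA hB
    _ ≤ (1 + C) * ξ * (C * ∫ ω, (∑ i, X i ω) ^ 2 ∂P) := by
        apply mul_le_mul_of_nonneg_left hD (by positivity)
    _ = (1 + C) * C * ξ * ∫ ω, (∑ i, X i ω) ^ 2 ∂P := by ring
end
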